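/- Consider the index-2 Stokes-type DAE with E₁₁ ∈ ℂ^{n₁×n₁} invertible, A₁₁ ∈ ℂ^{n₁×n₁}, A₂₁ ∈ ℂ^{n₂×n₁} such that A₂₁ E₁₁^{-1} A₂₁ᵀ is invertible, B₁ ∈ ℂ^{n₁×m}, C₁ ∈ ℂ^{p×n₁}, D ∈ ℂ^{p×m}. Let 𝔼 = [[E₁₁, 0],[0, 0]], 𝔸 = [[A₁₁, A₂₁ᵀ],[A₂₁, 0]] ∈ ℂ^{(n₁+n₂)×(n₁+n₂)}, 𝔹 = [B₁; 0], ℭ = [C₁, 0], and G(s) = ℭ(s𝔼 − 𝔸)^{-1}𝔹 + D. Let σ₁,…,σ_r ∈ ℂ, b₁,…,b_r ∈ ℂ^m, c₁,…,c_r ∈ ℂ^p, and suppose for each i the saddle-point matrices [[σᵢE₁₁ − A₁₁, A₂₁ᵀ],[A₂₁, 0]] and [[σᵢE₁₁ᵀ − A₁₁ᵀ, A₂₁ᵀ],[A₂₁, 0]] are invertible, and let (vᵢ, zᵢ) and (wᵢ, qᵢ) solve [[σᵢE₁₁ − A₁₁, A₂₁ᵀ],[A₂₁, 0]][vᵢ;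 zᵢ] = [B₁ bᵢ; 0] and [[σᵢE₁₁ᵀ − A₁₁ᵀ, A₂₁ᵀ],[A₂₁, 0]][wᵢ; qᵢ] = [C₁ᵀ cᵢ; 0]. Set V = [v₁,…,v_r], W = [w₁,…,w_r] ∈ ℂ^{n₁×r} and G̃(s) = C₁V (s Wᵀ E₁₁ V − Wᵀ A₁₁ V)^{-1} Wᵀ B₁ + D. Then for each j such that σⱼ Wᵀ E₁₁ V − Wᵀ A₁₁ V is invertible, the right tangential interpolation condition G(σⱼ) bⱼ = G̃(σⱼ) bⱼ holds. -/

import Mathlib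

open Matrix

/-- Interpolatory model reduction for index-2 Stokes-type DAEs without spectral
projectors (right tangential condition).  The bases `V` and `W` are built from
solutions of the saddle-point systems; the reduced model interpolates `G` from
the right at each interpolation point. -/
theorem index2_right_tangential_interpolation
    (n₁ n₂ m p r : ℕ)
    (E₁₁ A₁₁ : Matrix (Fin n₁) (Fin n₁) ℂ)
    (A₂₁ : Matrix (Fin n₂) (Fin n₁) ℂ)
    (B₁ : Matrix (Fin n₁) (Fin m) ℂ)
    (C₁ : Matrix (Fin p) (Fin n₁) ℂ)
    (D : Matrix (Fin p) (Fin m) ℂ)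
    (hE : IsUnit E₁₁)
    (hSchur : IsUnit (A₂₁ * E₁₁⁻¹ * A₂₁ᵀ))
    (σ : Fin r → ℂ) (b : Fin r → Fin m → ℂ) (c : Fin r → Fin p → ℂ)
    (v w : Fin r → Fin n₁ → ℂ) (z q : Fin r → Fin n₂ → ℂ)
    (hsadV : ∀ i, IsUnit (fromBlocks (σ i • E₁₁ - A₁₁) A₂₁ᵀ A₂₁ 0))
    (hsadW : ∀ i, IsUnit (fromBlocks (σ i • E₁₁ᵀ - A₁₁ᵀ) A₂₁ᵀ A₂₁ 0))
    (hv : ∀ i, (fromBlocks (σ i • E₁₁ - A₁₁) A₂₁ᵀ A₂₁ 0).mulVec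
        (Sum.elim (v i) (z i)) = Sum.elim (B₁.mulVec (b i)) 0)
    (hw : ∀ i, (fromBlocks (σ i • E₁₁ᵀ - A₁₁ᵀ) A₂₁ᵀ A₂₁ 0).mulVec
        (Sum.elim (w i) (q i)) = Sum.elim (C₁ᵀ.mulVec (c i)) 0)
    (V W : Matrix (Fin n₁) (Fin r) ℂ)
    (hV : V = (Matrix.of v)ᵀ)
    (hW : W = (Matrix.of w)ᵀ)
    (j : Fin r)
    (hred : IsUnit (σ j • (Wᵀ * E₁₁ * V) - Wᵀ * A₁₁ * V)) :
    (Matrix.fromCols C₁ (0 : Matrix (Fin p) (Fin n₂) ℂ)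
        * (σ j • fromBlocks E₁₁ 0 0 0 - fromBlocks A₁₁ A₂₁ᵀ A₂₁ 0)⁻¹
        * fromRows B₁ (0 : Matrix (Fin n₂) (Fin m) ℂ) + D).mulVec (b j)
      = (C₁ * V * (σ j • (Wᵀ * E₁₁ * V) - Wᵀ * A₁₁ * V)⁻¹ * (Wᵀ * B₁)
          + D).mulVec (b j) := by
  set K : Matrix (Fin n₁) (Fin n₁) ℂ := σ j • E₁₁ - A₁₁ with hK
  set M : Matrix (Fin n₁ ⊕ Fin n₂) (Fin n₁ ⊕ Fin n₂) ℂ :=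
    σ j • fromBlocks E₁₁ 0 0 0 - fromBlocks A₁₁ A₂₁ᵀ A₂₁ 0 with hM
  -- M as a block matrix
  have hMblock : M = fromBlocks K (-A₂₁ᵀ) (-A₂₁) 0 := by
    rw [hM, fromBlocks_smul, sub_eq_add_neg, fromBlocks_neg, fromBlocks_add]
    simp [hK, sub_eq_add_neg]
  -- J = diag(1, -1)
  set J : Matrix (Fin n₁ ⊕ Fin n₂) (Fin n₁ ⊕ Fin n₂) ℂ := fromBlocks 1 0 0 (-1) with hJ
  have hJJ : J * J = 1 := by
    rw [hJ, fromBlocks_multiply]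
    simp [← fromBlocks_one]
  have hJunit : IsUnit J := ⟨⟨J, J, hJJ, hJJ⟩, rfl⟩
  have hJSJ : J * fromBlocks K A₂₁ᵀ A₂₁ 0 * J = M := by
    rw [hJ, hMblock, fromBlocks_multiply, fromBlocks_multiply]
    simp
  have hMunit : IsUnit M := by
    rw [← hJSJ]; exact (hJunit.mul (hsadV j)).mul hJunit
  -- components of the saddle-point solutions
  have hv' : Sum.elim (K.mulVec (v j) + A₂₁ᵀ.mulVec (z j)) (A₂₁.mulVec (v j) + 0)
      = Sum.elim (B₁.mulVec (b j)) 0 := by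
    have h := hv j
    rwa [fromBlocks_mulVec, Sum.elim_comp_inl, Sum.elim_comp_inr,
      Matrix.zero_mulVec] at h
  have hv1 : K.mulVec (v j) + A₂₁ᵀ.mulVec (z j) = B₁.mulVec (b j) :=
    funext fun i => congrFun hv' (Sum.inl i)
  have hAw : ∀ i, A₂₁.mulVec (w i) = 0 := by
    intro i
    have h := hw i
    rw [fromBlocks_mulVec, Sum.elim_comp_inl, Sum.elim_comp_inr,
      Matrix.zero_mulVec, add_zero] at h
    exact funext fun a => congrFun h (Sum.inr a)
  -- M solves the same system with (v j, -z j)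
  have hMsol : M.mulVec (Sum.elim (v j) (-(z j))) = Sum.elim (B₁.mulVec (b j)) 0 := by
    rw [hMblock, fromBlocks_mulVec, Sum.elim_comp_inl, Sum.elim_comp_inr,
      Matrix.zero_mulVec, add_zero, Matrix.neg_mulVec, Matrix.neg_mulVec,
      Matrix.mulVec_neg]
    rw [neg_neg, hv1]
    have h2 : A₂₁.mulVec (v j) = 0 := by
      have := funext fun a => congrFun hv' (Sum.inr a)
      simpa [funext_iff] using this
    rw [h2, neg_zero]
  have hMinv : M⁻¹.mulVec (Sum.elim (B₁.mulVec (b j)) 0) = Sum.elim (v j) (-(z j)) := by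
    rw [← hMsol, Matrix.mulVec_mulVec, Matrix.nonsing_inv_mul M
      ((Matrix.isUnit_iff_isUnit_det M).mp hMunit), Matrix.one_mulVec]
  -- reduced system
  set R : Matrix (Fin r) (Fin r) ℂ := σ j • (Wᵀ * E₁₁ * V) - Wᵀ * A₁₁ * V with hR
  have hVe : V.mulVec (Pi.single j 1) = v j := by
    rw [Matrix.mulVec_single_one, hV]; rfl
  have hWA : Wᵀ * A₂₁ᵀ = 0 := by
    have : A₂₁ * W = 0 := by
      ext a i
      rw [hW]
      simpa [Matrix.mulVec, dotProduct, Matrix.mul_apply] using congrFun (hAw i) a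
    calc Wᵀ * A₂₁ᵀ = (A₂₁ * W)ᵀ := by rw [transpose_mul]
    _ = 0 := by rw [this, transpose_zero]
  have hRsol : R.mulVec (Pi.single j 1) = (Wᵀ * B₁).mulVec (b j) := by
    have : R.mulVec (Pi.single j 1) = Wᵀ.mulVec (K.mulVec (v j)) := by
      rw [hR, hK, Matrix.sub_mulVec, Matrix.smul_mulVec]
      rw [show (Wᵀ * E₁₁ * V).mulVec (Pi.single j 1) = Wᵀ.mulVec (E₁₁.mulVec (v j)) by
        rw [Matrix.mul_assoc, ← Matrix.mulVec_mulVec, ← Matrix.mulVec_mulVec, hVe]]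
      rw [show (Wᵀ * A₁₁ * V).mulVec (Pi.single j 1) = Wᵀ.mulVec (A₁₁.mulVec (v j)) by
        rw [Matrix.mul_assoc, ← Matrix.mulVec_mulVec, ← Matrix.mulVec_mulVec, hVe]]
      rw [Matrix.sub_mulVec, Matrix.smul_mulVec, Matrix.mulVec_sub,
        Matrix.mulVec_smul]
    rw [this, ← Matrix.mulVec_mulVec (b j) Wᵀ B₁, ← hv1, Matrix.mulVec_add,
      Matrix.mulVec_mulVec (z j) Wᵀ A₂₁ᵀ, hWA, Matrix.zero_mulVec, add_zero]
  have hRinv : R⁻¹.mulVec ((Wᵀ * B₁).mulVec (b j)) = Pi.single j 1 := by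
    rw [← hRsol, Matrix.mulVec_mulVec, Matrix.nonsing_inv_mul R
      ((Matrix.isUnit_iff_isUnit_det R).mp hred), Matrix.one_mulVec]
  -- putting things together
  have hlhs : (Matrix.fromCols C₁ (0 : Matrix (Fin p) (Fin n₂) ℂ) * M⁻¹ * fromRows B₁ (0 : Matrix (Fin n₂) (Fin m) ℂ)).mulVec (b j)
      = C₁.mulVec (v j) := by
    rw [Matrix.mul_assoc, ← Matrix.mulVec_mulVec, ← Matrix.mulVec_mulVec,
      fromRows_mulVec, Matrix.zero_mulVec, hMinv, fromCols_mulVec_sumElim, Matrix.zero_mulVec,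
      add_zero]
  have hrhs : (C₁ * V * R⁻¹ * (Wᵀ * B₁)).mulVec (b j) = C₁.mulVec (v j) := by
    rw [← Matrix.mulVec_mulVec, ← Matrix.mulVec_mulVec, hRinv, ← Matrix.mulVec_mulVec, hVe]
  rw [Matrix.add_mulVec, Matrix.add_mulVec, hlhs, hrhs]
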